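/- Let X be a closed 1-pseudo-Lipschitz subset of the pseudo-Euclidean space ℝ_{(l,p)}, let a ∈ X, and suppose X is C¹-regular of codimension k at a, i.e. there exist an open neighbourhood U of a in ℝ^n, an open set V ⊂ ℝ^{n−k}, a point t₀ ∈ V, and a C¹ map g : V → ℝ^n with g(t₀) = a, g a homeomorphism of V onto X ∩ U, and Dg(t₀) injective. If x₁, …, x_{k+1} ∈ ℝ^n are points with a ∈ m(x_i) for every i = 1,…,k+1, then the vectors x₁ − a, …, x_{k+1} − a are linearly dependent. -/

import Mathlib

open Filter Topology Set
open scoped RealInnerProductSpace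

noncomputable section

/-- The pseudo-Euclidean space `ℝ_{(l,p)}`: `ℝ^(l+p)` with the Euclidean topology. -/
abbrev PE (l p : ℕ) := EuclideanSpace ℝ (Fin (l + p))

/-- The quadratic form `Q(x) = ‖x‖_l² − ‖x‖_p²`. -/
def Q (l p : ℕ) (x : PE l p) : ℝ :=
  ∑ i : Fin (l + p), if (i : ℕ) < l then (x i) ^ 2 else -((x i) ^ 2)

/-- The pseudo-scalar product `⟪x,y⟫ = Σ_{i<l} x_i y_i − Σ_{i≥l} x_i y_i`. -/
def pseudoInner (l p : ℕ) (x y : PE l p) : ℝ :=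
  ∑ i : Fin (l + p), if (i : ℕ) < l then x i * y i else -(x i * y i)

/-- `‖x‖_l`: the Euclidean norm of the first `l` coordinates. -/
def normL (l p : ℕ) (x : PE l p) : ℝ :=
  Real.sqrt (∑ i : Fin (l + p), if (i : ℕ) < l then (x i) ^ 2 else 0)

/-- `‖x‖_p`: the Euclidean norm of the last `p` coordinates. -/
def normP (l p : ℕ) (x : PE l p) : ℝ :=
  Real.sqrt (∑ i : Fin (l + p), if (i : ℕ) < l then 0 else (x i) ^ 2)

/-- `X` is acausal: `Q(x−y) > 0` for all distinct `x, y ∈ X`. -/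
def Acausal (l p : ℕ) (X : Set (PE l p)) : Prop :=
  ∀ x ∈ X, ∀ y ∈ X, x ≠ y → 0 < Q l p (x - y)

/-- `X` is `L`-pseudo-Lipschitz: `L‖x−y‖_l ≥ ‖x−y‖_p` for all `x, y ∈ X`. -/
def PseudoLipschitz (l p : ℕ) (L : ℝ) (X : Set (PE l p)) : Prop :=
  ∀ x ∈ X, ∀ y ∈ X, normP l p (x - y) ≤ L * normL l p (x - y)

/-- The squared-distance function `ρ(a,X) = inf {Q(x−a) : x ∈ X}`. -/
def rho (l p : ℕ) (X : Set (PE l p)) (a : PE l p) : ℝ :=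
  sInf ((fun x => Q l p (x - a)) '' X)

/-- The set of closest points `m(a) = {x ∈ X : Q(x−a) = ρ(a,X)}`, via its equivalent
description `m(a) = {x ∈ X : ∀ b ∈ X, Q(x−a) ≤ Q(b−a)}`. -/
def mm (l p : ℕ) (X : Set (PE l p)) (a : PE l p) : Set (PE l p) :=
  {x ∈ X | ∀ b ∈ X, Q l p (x - a) ≤ Q l p (b - a)}

/-- The medial axis `M_X`: points with at least two closest points in `X`. -/
def medialAxis (l p : ℕ) (X : Set (PE l p)) : Set (PE l p) :=
  {a | (mm l p X a).Nontrivial}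

/-- The vacant axis `W_X`: points with no closest point in `X`. -/
def vacantAxis (l p : ℕ) (X : Set (PE l p)) : Set (PE l p) :=
  {a | mm l p X a = ∅}

/-- The normal set `N(a) = {x : a ∈ m(x)}`. -/
def NN (l p : ℕ) (X : Set (PE l p)) (a : PE l p) : Set (PE l p) :=
  {x | a ∈ mm l p X x}

/-- The strict normal set `N'(a) = {x : m(x) = {a}}`. -/
def NN' (l p : ℕ) (X : Set (PE l p)) (a : PE l p) : Set (PE l p) :=
  {x | mm l p X x = {a}}

def Jmap (l p : ℕ) : PE l p ≃ₗ[ℝ] PE l p :=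
  LinearEquiv.ofInvolutive
    { toFun := fun x => WithLp.toLp 2 (fun i : Fin (l + p) => if (i : ℕ) < l then x i else -x i)
      map_add' := by
        intro u v; ext i
        simp only [PiLp.add_apply, PiLp.toLp_apply]
        split <;> ring
      map_smul' := by
        intro c u; ext i
        simp only [PiLp.smul_apply, PiLp.toLp_apply, smul_eq_mul, RingHom.id_apply]
        split <;> ring }
    (by intro u; ext i; simp only [LinearMap.coe_mk, AddHom.coe_mk]; by_cases h : (i : ℕ) < l <;> simp [h])

lemma Jmap_apply (l p : ℕ) (u : PE l p) (i : Fin (l+p)) :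
    Jmap l p u i = if (i : ℕ) < l then u i else -u i := rfl

lemma inner_J (l p : ℕ) (u v : PE l p) :
    ⟪Jmap l p u, v⟫ = pseudoInner l p u v := by
  simp only [PiLp.inner_apply, RCLike.inner_apply, conj_trivial, pseudoInner, Jmap_apply]
  refine Finset.sum_congr rfl fun i _ => ?_
  split <;> ring

lemma Q_eq (l p : ℕ) (z : PE l p) : Q l p z = ⟪Jmap l p z, z⟫ := by
  simp only [PiLp.inner_apply, RCLike.inner_apply, conj_trivial, Q, Jmap_apply]
  refine Finset.sum_congr rfl fun i _ => ?_
  split <;> ring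

lemma Jsymm (l p : ℕ) (u v : PE l p) :
    ⟪Jmap l p u, v⟫ = ⟪Jmap l p v, u⟫ := by
  simp only [PiLp.inner_apply, RCLike.inner_apply, conj_trivial, Jmap_apply]
  refine Finset.sum_congr rfl fun i _ => ?_
  split <;> ring

def JCLM (l p : ℕ) : PE l p →L[ℝ] PE l p :=
  LinearMap.toContinuousLinearMap (Jmap l p).toLinearMap

lemma hasFDerivAt_Q (l p : ℕ) (y : PE l p) :
    HasFDerivAt (Q l p)
      ((fderivInnerCLM ℝ (Jmap l p y, y)).comp ((JCLM l p).prod (ContinuousLinearMap.id ℝ _))) y := by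
  have h := ((JCLM l p).hasFDerivAt (x := y)).inner ℝ (hasFDerivAt_id y)
  have he : (fun z => ⟪JCLM l p z, id z⟫) = Q l p := by
    funext z; exact (Q_eq l p z).symm
  rw [he] at h
  exact h

lemma deriv_Q_apply (l p : ℕ) (y v : PE l p) :
    ((fderivInnerCLM ℝ (Jmap l p y, y)).comp ((JCLM l p).prod (ContinuousLinearMap.id ℝ _))) v
      = 2 * ⟪Jmap l p y, v⟫ := by
  simp only [ContinuousLinearMap.comp_apply, ContinuousLinearMap.prod_apply,
    ContinuousLinearMap.id_apply, fderivInnerCLM_apply]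
  have : ⟪(JCLM l p) v, y⟫ = ⟪Jmap l p y, v⟫ := by
    have : (JCLM l p) v = Jmap l p v := rfl
    rw [this, Jsymm]
  rw [this]; ring

/-- Let `X` be a closed `1`-pseudo-Lipschitz subset of `ℝ_{(l,p)}`, `a ∈ X`,
and suppose `X` is `C¹`-regular of codimension `k` at `a` (a `C¹` parametrisation
`g : V → ℝ^n`, `V ⊂ ℝ^{n−k}` open, `g t₀ = a`, `g` a homeomorphism of `V` onto `X ∩ U` with
continuous inverse `ginv`, `Dg(t₀)` injective). If `x₁, …, x_{k+1}` satisfy `a ∈ m(x_i)` for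
all `i`, then the vectors `x_i − a` are linearly dependent. -/
theorem closestPoint_directions_linearDependent (l p k : ℕ) (hl : 1 ≤ l)
    (hk1 : 1 ≤ k) (hk2 : k ≤ l + p)
    (X : Set (PE l p)) (hX : IsClosed X) (hlip : PseudoLipschitz l p 1 X)
    (a : PE l p) (ha : a ∈ X)
    (U : Set (PE l p)) (hU : IsOpen U) (haU : a ∈ U)
    (V : Set (EuclideanSpace ℝ (Fin (l + p - k)))) (hV : IsOpen V)
    (t₀ : EuclideanSpace ℝ (Fin (l + p - k))) (ht₀ : t₀ ∈ V)
    (g : EuclideanSpace ℝ (Fin (l + p - k)) → PE l p)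
    (hg : ContDiffOn ℝ 1 g V) (hgt₀ : g t₀ = a)
    (hgV : g '' V = X ∩ U)
    (ginv : PE l p → EuclideanSpace ℝ (Fin (l + p - k)))
    (hginv : ContinuousOn ginv (X ∩ U)) (hinv : ∀ t ∈ V, ginv (g t) = t)
    (hDg : Function.Injective ⇑(fderiv ℝ g t₀))
    (x : Fin (k + 1) → PE l p) (hx : ∀ i, a ∈ mm l p X (x i)) :
    ¬ LinearIndependent ℝ (fun i => x i - a) := by
  intro hLI
  set Dg := fderiv ℝ g t₀ with hDgdef
  have key : ∀ i v, ⟪Jmap l p (x i - a), Dg v⟫ = 0 := by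
    intro i v
    have hgd : HasFDerivAt g Dg t₀ :=
      ((hg.contDiffAt (hV.mem_nhds ht₀)).differentiableAt one_ne_zero).hasFDerivAt
    have hsub : HasFDerivAt (fun t => g t - x i) Dg t₀ := hgd.sub_const _
    have hQ := hasFDerivAt_Q l p (a - x i)
    rw [← hgt₀] at hQ
    have hcomp := hQ.comp t₀ hsub
    have hmin : IsLocalMin (fun t => Q l p (g t - x i)) t₀ := by
      have hxm := (hx i).2
      filter_upwards [hV.mem_nhds ht₀] with t ht
      have hgtX : g t ∈ X := by
        have : g t ∈ X ∩ U := hgV ▸ Set.mem_image_of_mem g ht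
        exact this.1
      simpa [hgt₀] using hxm (g t) hgtX
    have hzero := hmin.hasFDerivAt_eq_zero hcomp
    have hz : (2 : ℝ) * ⟪Jmap l p (g t₀ - x i), Dg v⟫ = 0 := by
      rw [← deriv_Q_apply l p (g t₀ - x i) (Dg v), ← ContinuousLinearMap.comp_apply, hzero,
        ContinuousLinearMap.zero_apply]
    have h1 : ⟪Jmap l p (g t₀ - x i), Dg v⟫ = 0 := by linarith
    have h2 : x i - a = -(g t₀ - x i) := by rw [hgt₀]; abel
    rw [h2, map_neg, inner_neg_left, h1, neg_zero]
  set W : Submodule ℝ (PE l p) := LinearMap.range ((Dg : EuclideanSpace ℝ (Fin (l + p - k)) →L[ℝ] PE l p) : EuclideanSpace ℝ (Fin (l + p - k)) →ₗ[ℝ] PE l p) with hW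
  have hmemS : ∀ i, Jmap l p (x i - a) ∈ Wᗮ := by
    intro i
    rw [Submodule.mem_orthogonal]
    rintro u ⟨v, rfl⟩
    rw [real_inner_comm]
    exact key i v
  have hrW : Module.finrank ℝ W = l + p - k := by
    rw [hW, LinearMap.finrank_range_of_inj hDg, finrank_euclideanSpace_fin]
  have hsum : Module.finrank ℝ W + Module.finrank ℝ Wᗮ = Module.finrank ℝ (PE l p) :=
    W.finrank_add_finrank_orthogonal
  rw [hrW, finrank_euclideanSpace_fin] at hsum
  have hLI2 : LinearIndependent ℝ (fun i => Jmap l p (x i - a)) :=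
    hLI.map' (Jmap l p).toLinearMap (LinearEquiv.ker _)
  have hw : LinearIndependent ℝ (fun i : Fin (k+1) => (⟨Jmap l p (x i - a), hmemS i⟩ : Wᗮ)) :=
    LinearIndependent.of_comp (Wᗮ).subtype hLI2
  have hcard := hw.fintype_card_le_finrank
  rw [Fintype.card_fin] at hcard
  omega
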